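/- Generalized Grönwall inequality: let u : [0,T] → [0,∞) be continuous and suppose there exist constants a ≥ 0, b ≥ 0 and α ∈ (0,1) such that u(t) ≤ a + b ∫₀ᵗ (t−s)^{α−1} u(s) ds for all t ∈ [0,T]. Then there exists a constant C depending only on b, α, T such that u(t) ≤ C·a for all t ∈ [0,T]. -/

import Mathlib

open MeasureTheory intervalIntegral

/-- Generalized Grönwall inequality with weakly singular kernel:
if `u : [0,T] → [0,∞)` is continuous and `u t ≤ a + b ∫₀ᵗ (t-s)^(α-1) u s ds` on
`[0,T]` with `a, b ≥ 0` and `α ∈ (0,1)`, then `u t ≤ C * a` on `[0,T]`, where `C`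
depends only on `b`, `α`, `T`. -/
theorem generalized_gronwall_singular_kernel
    (T b α : ℝ) (hT : 0 < T) (hb : 0 ≤ b) (hα0 : 0 < α) (hα1 : α < 1) :
    ∃ C : ℝ, 0 < C ∧ ∀ (u : ℝ → ℝ) (a : ℝ), 0 ≤ a →
      ContinuousOn u (Set.Icc 0 T) →
      (∀ t ∈ Set.Icc (0:ℝ) T, 0 ≤ u t) →
      (∀ t ∈ Set.Icc (0:ℝ) T, u t ≤ a + b * ∫ s in (0:ℝ)..t, (t - s) ^ (α - 1) * u s) →
      ∀ t ∈ Set.Icc (0:ℝ) T, u t ≤ C * a := by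
  -- Gamma function value
  set Γa := Real.Gamma α with hΓa
  have hΓpos : 0 < Γa := Real.Gamma_pos_of_pos hα0
  -- choose the exponential weight L
  set L : ℝ := max 1 ((2 * b * Γa) ^ α⁻¹) with hL
  have hL1 : 1 ≤ L := le_max_left _ _
  have hL0 : 0 < L := lt_of_lt_of_le one_pos hL1
  have hLα : 2 * b * Γa ≤ L ^ α := by
    calc 2 * b * Γa = ((2 * b * Γa) ^ α⁻¹) ^ α := by
          rw [Real.rpow_inv_rpow (by positivity) (ne_of_gt hα0)]
      _ ≤ L ^ α := Real.rpow_le_rpow (by positivity) (le_max_right _ _) hα0.le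
  have hkey : b * Γa * (1 / L) ^ α ≤ 1 / 2 := by
    rw [Real.div_rpow (by norm_num) hL0.le, Real.one_rpow, mul_one_div,
      div_le_div_iff₀ (by positivity) (by norm_num : (0:ℝ) < 2)]
    linarith
  refine ⟨2 * Real.exp (L * T), by positivity, ?_⟩
  intro u a ha hu hpos hineq
  -- maximize v s = u s * exp (-(L * s)) on [0, T]
  have hvcont : ContinuousOn (fun s => u s * Real.exp (-(L * s))) (Set.Icc 0 T) :=
    hu.mul (Continuous.continuousOn (by continuity))
  obtain ⟨x, hx, hxmax⟩ := isCompact_Icc.exists_isMaxOn ⟨0, by constructor <;> [rfl; exact hT.le]⟩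
    hvcont
  set M : ℝ := u x * Real.exp (-(L * x)) with hM
  have hM0 : 0 ≤ M := mul_nonneg (hpos x hx) (Real.exp_pos _).le
  have hMs : ∀ s ∈ Set.Icc (0:ℝ) T, u s ≤ M * Real.exp (L * s) := by
    intro s hs
    have := hxmax hs
    simp only [Set.mem_setOf_eq] at this
    have h2 : u s * Real.exp (-(L * s)) * Real.exp (L * s) ≤ M * Real.exp (L * s) :=
      mul_le_mul_of_nonneg_right this (Real.exp_pos _).le
    rwa [mul_assoc, ← Real.exp_add, neg_add_cancel, Real.exp_zero, mul_one] at h2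
  -- integrability of the kernel
  have hker : ∀ t : ℝ, IntervalIntegrable (fun s => (t - s) ^ (α - 1)) volume 0 t := by
    intro t
    have h := (intervalIntegrable_rpow' (a := t) (b := 0)
      (show (-1:ℝ) < α - 1 by linarith)).comp_sub_left t
    simpa using h
  -- integrability of kernel times exponential on Ioi 0
  have hG : IntegrableOn (fun τ : ℝ => τ ^ (α - 1) * Real.exp (-(L * τ))) (Set.Ioi 0) := by
    have h := integrableOn_rpow_mul_exp_neg_mul_rpow
      (show (-1:ℝ) < α - 1 by linarith) (zero_lt_one' ℝ) hL0
    refine h.congr_fun (fun τ hτ => ?_) measurableSet_Ioi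
    beta_reduce
    rw [Real.rpow_one, neg_mul]
  -- core estimate on the integral
  have hint : ∀ t ∈ Set.Icc (0:ℝ) T,
      (∫ s in (0:ℝ)..t, (t - s) ^ (α - 1) * u s)
        ≤ M * Real.exp (L * t) * ((1 / L) ^ α * Γa) := by
    intro t ht
    obtain ⟨ht0, htT⟩ := ht
    have huIcc : Set.Icc (0:ℝ) t ⊆ Set.Icc 0 T := Set.Icc_subset_Icc le_rfl htT
    have hucont : ContinuousOn u (Set.uIcc 0 t) := by
      rw [Set.uIcc_of_le ht0]; exact hu.mono huIcc
    have h1 : IntervalIntegrable (fun s => (t - s) ^ (α - 1) * u s) volume 0 t :=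
      (hker t).mul_continuousOn hucont
    have h2 : IntervalIntegrable
        (fun s => (t - s) ^ (α - 1) * (M * Real.exp (L * s))) volume 0 t :=
      (hker t).mul_continuousOn (Continuous.continuousOn (by continuity))
    have step1 : (∫ s in (0:ℝ)..t, (t - s) ^ (α - 1) * u s)
        ≤ ∫ s in (0:ℝ)..t, (t - s) ^ (α - 1) * (M * Real.exp (L * s)) := by
      apply intervalIntegral.integral_mono_on ht0 h1 h2
      intro s hs
      have hksnn : 0 ≤ (t - s) ^ (α - 1) :=
        Real.rpow_nonneg (by linarith [hs.2]) _
      exact mul_le_mul_of_nonneg_left (hMs s ⟨hs.1, le_trans hs.2 htT⟩) hksnn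
    have step2 : (∫ s in (0:ℝ)..t, (t - s) ^ (α - 1) * (M * Real.exp (L * s)))
        = M * Real.exp (L * t) * ∫ τ in (0:ℝ)..t, τ ^ (α - 1) * Real.exp (-(L * τ)) := by
      have : ∀ s : ℝ, (t - s) ^ (α - 1) * (M * Real.exp (L * s))
          = M * Real.exp (L * t) * ((t - s) ^ (α - 1) * Real.exp (-(L * (t - s)))) := by
        intro s
        have hE : Real.exp (L * t) * Real.exp (-(L * (t - s))) = Real.exp (L * s) := by
          rw [← Real.exp_add]; ring_nf
        rw [show M * Real.exp (L * t) * ((t - s) ^ (α - 1) * Real.exp (-(L * (t - s))))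
            = (t - s) ^ (α - 1) * (M * (Real.exp (L * t) * Real.exp (-(L * (t - s))))) by ring,
          hE]
      simp_rw [this]
      rw [intervalIntegral.integral_const_mul,
        intervalIntegral.integral_comp_sub_left
          (fun τ => τ ^ (α - 1) * Real.exp (-(L * τ))) t]
      norm_num
    have step3 : (∫ τ in (0:ℝ)..t, τ ^ (α - 1) * Real.exp (-(L * τ))) ≤ (1 / L) ^ α * Γa := by
      rw [intervalIntegral.integral_of_le ht0]
      have hmono : (∫ τ in Set.Ioc (0:ℝ) t, τ ^ (α - 1) * Real.exp (-(L * τ)))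
          ≤ ∫ τ in Set.Ioi (0:ℝ), τ ^ (α - 1) * Real.exp (-(L * τ)) := by
        apply setIntegral_mono_set hG
        · filter_upwards [ae_restrict_mem measurableSet_Ioi] with τ hτ
          exact mul_nonneg (Real.rpow_nonneg (le_of_lt hτ) _) (Real.exp_pos _).le
        · exact Filter.Eventually.of_forall Set.Ioc_subset_Ioi_self
      calc (∫ τ in Set.Ioc (0:ℝ) t, τ ^ (α - 1) * Real.exp (-(L * τ)))
          ≤ ∫ τ in Set.Ioi (0:ℝ), τ ^ (α - 1) * Real.exp (-(L * τ)) := hmono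
        _ = (1 / L) ^ α * Γa := Real.integral_rpow_mul_exp_neg_mul_Ioi hα0 hL0
    calc (∫ s in (0:ℝ)..t, (t - s) ^ (α - 1) * u s)
        ≤ ∫ s in (0:ℝ)..t, (t - s) ^ (α - 1) * (M * Real.exp (L * s)) := step1
      _ = M * Real.exp (L * t) * ∫ τ in (0:ℝ)..t, τ ^ (α - 1) * Real.exp (-(L * τ)) := step2
      _ ≤ M * Real.exp (L * t) * ((1 / L) ^ α * Γa) := by
          apply mul_le_mul_of_nonneg_left step3 (by positivity)
  -- combined pointwise bound
  have hmain : ∀ t ∈ Set.Icc (0:ℝ) T, u t ≤ a + Real.exp (L * t) * (M / 2) := by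
    intro t ht
    have h1 := hineq t ht
    have h2 := hint t ht
    have h3 : b * (∫ s in (0:ℝ)..t, (t - s) ^ (α - 1) * u s)
        ≤ b * (M * Real.exp (L * t) * ((1 / L) ^ α * Γa)) :=
      mul_le_mul_of_nonneg_left h2 hb
    have h4 : b * (M * Real.exp (L * t) * ((1 / L) ^ α * Γa))
        ≤ Real.exp (L * t) * (M / 2) := by
      have hexp : (0:ℝ) ≤ Real.exp (L * t) := (Real.exp_pos _).le
      have := mul_le_mul_of_nonneg_left hkey (mul_nonneg hM0 hexp)
      calc b * (M * Real.exp (L * t) * ((1 / L) ^ α * Γa))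
          = M * Real.exp (L * t) * (b * Γa * (1 / L) ^ α) := by ring
        _ ≤ M * Real.exp (L * t) * (1 / 2) := this
        _ = Real.exp (L * t) * (M / 2) := by ring
    linarith
  -- bound the maximum
  have hMbound : M ≤ 2 * a := by
    have h1 := hmain x hx
    have hexp : (0:ℝ) < Real.exp (L * x) := Real.exp_pos _
    -- M * exp(L x) = u x
    have h2 : M * Real.exp (L * x) = u x := by
      rw [hM, mul_assoc, ← Real.exp_add, neg_add_cancel, Real.exp_zero, mul_one]
    have h3 : M * Real.exp (L * x) ≤ a + Real.exp (L * x) * (M / 2) := by rw [h2]; exact h1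
    have hexp1 : (1:ℝ) ≤ Real.exp (L * x) :=
      Real.one_le_exp (mul_nonneg hL0.le hx.1)
    have h5 : M * Real.exp (L * x) ≤ 2 * a := by linarith
    have h6 : M * 1 ≤ M * Real.exp (L * x) := mul_le_mul_of_nonneg_left hexp1 hM0
    linarith
  -- conclude
  intro t ht
  have h1 : u t ≤ M * Real.exp (L * t) := hMs t ht
  have h2 : Real.exp (L * t) ≤ Real.exp (L * T) :=
    Real.exp_le_exp.mpr (mul_le_mul_of_nonneg_left ht.2 hL0.le)
  have h3 : (0:ℝ) < Real.exp (L * T) := Real.exp_pos _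
  have h4 : M * Real.exp (L * t) ≤ M * Real.exp (L * T) := mul_le_mul_of_nonneg_left h2 hM0
  have h5 : M * Real.exp (L * T) ≤ 2 * a * Real.exp (L * T) :=
    mul_le_mul_of_nonneg_right hMbound h3.le
  calc u t ≤ M * Real.exp (L * t) := h1
    _ ≤ M * Real.exp (L * T) := h4
    _ ≤ 2 * a * Real.exp (L * T) := h5
    _ = 2 * Real.exp (L * T) * a := by ring
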